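/- Let k ≥ 1 be an integer, λ > 0, α ∈ (0,1), t ≥ 0, and n ≥ 0. Then ∑_{r=0}^∞ ((−(kλ)^α t)^r / r!) · ∑_{x ∈ Ω(k,n)} (−1)^{ζ(x)} (∏_{l=0}^{ζ(x)−1}(αr − l)) / (Π!(x) · k^{ζ(x)}) = ∑_{x ∈ Ω(k,n)} ((−1)^{ζ(x)} / (Π!(x) · k^{ζ(x)})) · (d^{ζ(x)}/du^{ζ(x)}) exp(−t k^α λ^α u^α) |_{u=1}; that is, the probability mass function of the space-fractional Poisson process of order k can be written via derivatives of u ↦ exp(−t k^α λ^α u^α) at u = 1. -/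

import Mathlib

open scoped BigOperators

/-- `Omega k n` is the (finite) set of tuples `(x₁,…,x_k)` of non-negative integers with
`x₁ + 2·x₂ + ⋯ + k·x_k = n`. -/
def Omega (k n : ℕ) : Finset (Fin k → ℕ) :=
  (Fintype.piFinset fun _ => Finset.range (n + 1)).filter
    (fun x => ∑ i, (i.1 + 1) * x i = n)

/-- `ζ(x) = x₁ + ⋯ + x_k`. -/
def zeta {k : ℕ} (x : Fin k → ℕ) : ℕ := ∑ i, x i

/-- `Π!(x) = x₁! ⋯ x_k!`. -/
def pifact {k : ℕ} (x : Fin k → ℕ) : ℕ := ∏ i, (x i).factorial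

/-- `c_k(n, y) = ∑_{x ∈ Ω(k,n)} y^{ζ(x)} / Π!(x)`. -/
noncomputable def ck (k n : ℕ) (y : ℝ) : ℝ :=
  ∑ x ∈ Omega k n, y ^ zeta x / (pifact x : ℝ)

section Aux
open Real Finset Set


-- factorial product identity
lemma prod_range_cast_factorial (r m : ℕ) :
    (r.factorial : ℝ) * ∏ l ∈ Finset.range m, ((r : ℝ) + l + 1) = (r + m).factorial := by
  induction m with
  | zero => simp
  | succ m ih =>
      rw [Finset.prod_range_succ, ← mul_assoc, ih]
      have : (r + (m+1)).factorial = (r + m + 1) * (r + m).factorial := by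
        rw [show r + (m+1) = (r+m)+1 by ring, Nat.factorial_succ]
      rw [this]
      push_cast
      ring

lemma choose_le_two_pow' (n k : ℕ) : n.choose k ≤ 2 ^ n := by
  rcases le_or_gt k n with h | h
  · calc n.choose k ≤ ∑ i ∈ Finset.range (n + 1), n.choose i :=
        Finset.single_le_sum (fun i _ => Nat.zero_le _)
          (Finset.mem_range.mpr (Nat.lt_succ_of_le h))
    _ = 2 ^ n := Nat.sum_range_choose n
  · simp [Nat.choose_eq_zero_of_lt h]

lemma factorial_add_le (r m : ℕ) :
    ((r + m).factorial : ℝ) ≤ r.factorial * m.factorial * 2 ^ (r + m) := by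
  have h := Nat.choose_mul_factorial_mul_factorial (Nat.le_add_left m r)
  have h2 : (r + m) - m = r := by omega
  rw [h2] at h
  calc ((r + m).factorial : ℝ) = ((r+m).choose m : ℝ) * m.factorial * r.factorial := by
        exact_mod_cast h.symm
  _ ≤ (2 ^ (r+m) : ℝ) * m.factorial * r.factorial := by
        have := choose_le_two_pow' (r+m) m
        gcongr
        exact_mod_cast this
  _ = r.factorial * m.factorial * 2 ^ (r + m) := by ring

-- bound on the falling-type product
lemma prod_abs_le (α : ℝ) (hα0 : 0 ≤ α) (hα1 : α ≤ 1) (m r : ℕ) :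
    |∏ l ∈ Finset.range m, (α * r - l)| ≤ m.factorial * 2 ^ (r + m) := by
  have h1 : |∏ l ∈ Finset.range m, (α * r - l)| ≤ ∏ l ∈ Finset.range m, ((r : ℝ) + l + 1) := by
    rw [Finset.abs_prod]
    apply Finset.prod_le_prod (fun l _ => abs_nonneg _)
    intro l _
    rw [abs_le]
    constructor
    · have h2 : (0:ℝ) ≤ α * r := by positivity
      nlinarith [Nat.cast_nonneg (α := ℝ) r, Nat.cast_nonneg (α := ℝ) l]
    · have h3 : α * r ≤ r := by
        nlinarith [Nat.cast_nonneg (α := ℝ) r]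
      nlinarith [Nat.cast_nonneg (α := ℝ) l]
  have h2 : ∏ l ∈ Finset.range m, ((r : ℝ) + l + 1) ≤ m.factorial * 2 ^ (r + m) := by
    have hr : (0:ℝ) < r.factorial := by exact_mod_cast r.factorial_pos
    have := factorial_add_le r m
    rw [← prod_range_cast_factorial r m] at this
    calc ∏ l ∈ Finset.range m, ((r : ℝ) + l + 1)
        = (r.factorial * ∏ l ∈ Finset.range m, ((r : ℝ) + l + 1)) / r.factorial := by
          field_simp
    _ ≤ (r.factorial * m.factorial * 2 ^ (r + m)) / r.factorial := by gcongr
    _ = m.factorial * 2 ^ (r + m) := by field_simp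
  linarith

-- rpow bound on Ioo (1/2) 2
lemma rpow_le_two_pow {u : ℝ} (hu : u ∈ Set.Ioo (1/2 : ℝ) 2) {e : ℝ} {N : ℕ}
    (he : |e| ≤ N) : u ^ e ≤ 2 ^ N := by
  have hu0 : 0 < u := lt_trans (by norm_num) hu.1
  have hlog : |Real.log u| ≤ Real.log 2 := by
    rw [abs_le]
    constructor
    · have : Real.log (1/2) ≤ Real.log u := Real.log_le_log (by norm_num) hu.1.le
      rw [show (1/2 : ℝ) = 2⁻¹ by norm_num, Real.log_inv] at this
      linarith
    · exact Real.log_le_log hu0 hu.2.le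
  have h2 : e * Real.log u ≤ N * Real.log 2 := by
    calc e * Real.log u ≤ |e * Real.log u| := le_abs_self _
    _ = |e| * |Real.log u| := abs_mul _ _
    _ ≤ N * Real.log 2 := by
        apply mul_le_mul he hlog (abs_nonneg _) (Nat.cast_nonneg _)
  calc u ^ e = Real.exp (Real.log u * e) := by
        rw [Real.rpow_def_of_pos hu0]
  _ ≤ Real.exp (Real.log 2 * N) := by
        apply Real.exp_le_exp.mpr; linarith [h2]
  _ = (2:ℝ) ^ (N : ℝ) := by rw [Real.rpow_def_of_pos (by norm_num)]
  _ = 2 ^ N := by rw [Real.rpow_natCast]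

/-- the `m`-th term function of the series. -/
noncomputable def fterm (α c : ℝ) (m r : ℕ) (u : ℝ) : ℝ :=
  ((-c) ^ r / r.factorial) * (∏ l ∈ Finset.range m, (α * r - l)) * u ^ (α * r - m)

/-- the series giving the `m`-th derivative. -/
noncomputable def Fser (α c : ℝ) (m : ℕ) (u : ℝ) : ℝ :=
  ∑' r : ℕ, fterm α c m r u

/-- uniform bound. -/
noncomputable def Bnd (c : ℝ) (m r : ℕ) : ℝ :=
  (m.factorial * 4 ^ m : ℝ) * ((4 * c) ^ r / r.factorial)

lemma fterm_bound {α c : ℝ} (hα0 : 0 ≤ α) (hα1 : α ≤ 1) (hc : 0 ≤ c) (m r : ℕ)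
    {u : ℝ} (hu : u ∈ Set.Ioo (1/2 : ℝ) 2) :
    ‖fterm α c m r u‖ ≤ Bnd c m r := by
  have hu0 : 0 < u := lt_trans (by norm_num) hu.1
  have hrf : (0:ℝ) < r.factorial := by exact_mod_cast r.factorial_pos
  have h1 : |(-c) ^ r / (r.factorial : ℝ)| = c ^ r / r.factorial := by
    rw [abs_div, abs_pow, abs_neg, abs_of_nonneg hc, abs_of_pos hrf]
  have h2 := prod_abs_le α hα0 hα1 m r
  have h3 : u ^ (α * r - m) ≤ 2 ^ (r + m) := by
    apply rpow_le_two_pow hu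
    rw [abs_le]
    push_cast
    constructor
    · nlinarith [Nat.cast_nonneg (α := ℝ) r, Nat.cast_nonneg (α := ℝ) m]
    · nlinarith [Nat.cast_nonneg (α := ℝ) r, Nat.cast_nonneg (α := ℝ) m]
  have h3' : |u ^ (α * r - m)| ≤ 2 ^ (r + m) := by
    rwa [abs_of_nonneg (Real.rpow_nonneg hu0.le _)]
  have hprod0 : (0:ℝ) ≤ m.factorial * 2 ^ (r + m) := by positivity
  calc ‖fterm α c m r u‖
      = |(-c) ^ r / (r.factorial : ℝ)| * |∏ l ∈ Finset.range m, (α * r - l)|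
          * |u ^ (α * r - m)| := by
        rw [Real.norm_eq_abs, fterm, abs_mul, abs_mul]
  _ ≤ (c ^ r / r.factorial) * (m.factorial * 2 ^ (r + m)) * (2 ^ (r + m)) := by
        rw [h1]
        apply mul_le_mul (mul_le_mul le_rfl h2 (abs_nonneg _) (by positivity)) h3'
          (abs_nonneg _) (by positivity)
  _ = Bnd c m r := by
        rw [Bnd, show (4:ℝ) = 2*2 by norm_num, mul_pow, pow_add]
        have h5 : ((2:ℝ)*2*c)^r = 2^r * 2^r * c^r := by rw [mul_pow, mul_pow]
        rw [h5]
        field_simp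

lemma summable_Bnd (c : ℝ) (m : ℕ) : Summable (Bnd c m) :=
  (Real.summable_pow_div_factorial (4 * c)).mul_left _

lemma summable_fterm {α c : ℝ} (hα0 : 0 ≤ α) (hα1 : α ≤ 1) (hc : 0 ≤ c) (m : ℕ)
    {u : ℝ} (hu : u ∈ Set.Ioo (1/2 : ℝ) 2) :
    Summable (fun r => fterm α c m r u) :=
  Summable.of_norm_bounded (summable_Bnd c m) (fun r => fterm_bound hα0 hα1 hc m r hu)

lemma fterm_hasDerivAt (α c : ℝ) (m r : ℕ) {u : ℝ} (hu : u ≠ 0) :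
    HasDerivAt (fterm α c m r) (fterm α c (m+1) r u) u := by
  have h := (Real.hasDerivAt_rpow_const (p := α * r - m) (Or.inl hu)).const_mul
    (((-c) ^ r / r.factorial) * (∏ l ∈ Finset.range m, (α * r - l)))
  convert h using 1
  · rfl
  · rfl
  · rfl
  rw [fterm, Finset.prod_range_succ]
  rw [show (α * r - ((m:ℕ)+1:ℕ) : ℝ) = α * r - m - 1 by push_cast; ring]
  ring

lemma Fser_hasDerivAt {α c : ℝ} (hα0 : 0 ≤ α) (hα1 : α ≤ 1) (hc : 0 ≤ c) (m : ℕ)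
    {u : ℝ} (hu : u ∈ Set.Ioo (1/2 : ℝ) 2) :
    HasDerivAt (Fser α c m) (Fser α c (m+1) u) u := by
  have h1 : (1:ℝ) ∈ Set.Ioo (1/2 : ℝ) 2 := by norm_num
  exact hasDerivAt_tsum_of_isPreconnected (summable_Bnd c (m+1)) isOpen_Ioo
    (isPreconnected_Ioo)
    (fun r y hy => fterm_hasDerivAt α c m r (lt_trans (by norm_num) hy.1).ne')
    (fun r y hy => fterm_bound hα0 hα1 hc (m+1) r hy)
    h1 (summable_fterm hα0 hα1 hc m h1) hu

lemma iteratedDeriv_exp_eq {α c : ℝ} (hα0 : 0 ≤ α) (hα1 : α ≤ 1) (hc : 0 ≤ c) (m : ℕ) :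
    ∀ u ∈ Set.Ioo (1/2 : ℝ) 2,
      iteratedDeriv m (fun v : ℝ => Real.exp (-c * v ^ α)) u = Fser α c m u := by
  induction m with
  | zero =>
      intro u hu
      have hu0 : 0 < u := lt_trans (by norm_num) hu.1
      rw [iteratedDeriv_zero, Fser]
      rw [Real.exp_eq_exp_ℝ, NormedSpace.exp_eq_tsum_div]
      apply tsum_congr
      intro r
      rw [fterm, mul_pow, ← Real.rpow_natCast (u ^ α) r, ← Real.rpow_mul hu0.le]
      simp only [Finset.range_zero, Finset.prod_empty, Nat.cast_zero, sub_zero]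
      ring
  | succ m ih =>
      intro u hu
      rw [iteratedDeriv_succ]
      have heq : iteratedDeriv m (fun v : ℝ => Real.exp (-c * v ^ α)) =ᶠ[nhds u]
          Fser α c m :=
        Filter.eventuallyEq_of_mem (isOpen_Ioo.mem_nhds hu) ih
      rw [heq.deriv_eq]
      exact (Fser_hasDerivAt hα0 hα1 hc m hu).deriv

lemma iteratedDeriv_exp_at_one {α c : ℝ} (hα0 : 0 ≤ α) (hα1 : α ≤ 1) (hc : 0 ≤ c) (m : ℕ) :
    iteratedDeriv m (fun v : ℝ => Real.exp (-c * v ^ α)) 1 =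
      ∑' r : ℕ, ((-c) ^ r / r.factorial) * (∏ l ∈ Finset.range m, (α * r - l)) := by
  rw [iteratedDeriv_exp_eq hα0 hα1 hc m 1 (by norm_num), Fser]
  apply tsum_congr
  intro r
  rw [fterm, Real.one_rpow, mul_one]


end Aux

/-- Alternative form of the marginal pmf of the space-fractional Poisson process of
order `k`: the double series equals
`∑_{x ∈ Ω(k,n)} ((−1)^{ζ(x)} / (Π!(x) k^{ζ(x)})) (d^{ζ(x)}/du^{ζ(x)}) e^{−t k^α λ^α u^α}|_{u=1}`. -/
theorem pmf_space_fractional_poisson_of_order_k_deriv_form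
    (k : ℕ) (hk : 1 ≤ k) (lam α t : ℝ) (hlam : 0 < lam) (hα : α ∈ Set.Ioo (0 : ℝ) 1)
    (ht : 0 ≤ t) (n : ℕ) :
    (∑' r : ℕ, ((-((k * lam) ^ α) * t) ^ r / r.factorial) *
        ∑ x ∈ Omega k n,
          (-1 : ℝ) ^ zeta x * (∏ l ∈ Finset.range (zeta x), (α * r - l)) /
            ((pifact x : ℝ) * (k : ℝ) ^ zeta x)) =
      ∑ x ∈ Omega k n,
        ((-1 : ℝ) ^ zeta x / ((pifact x : ℝ) * (k : ℝ) ^ zeta x)) *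
          iteratedDeriv (zeta x)
            (fun u : ℝ => Real.exp (-(t * (k : ℝ) ^ α * lam ^ α) * u ^ α)) 1 := by
  obtain ⟨hα0, hα1⟩ := hα
  have hk0 : (0:ℝ) < k := by exact_mod_cast Nat.lt_of_lt_of_le Nat.zero_lt_one hk
  set c := t * (k:ℝ) ^ α * lam ^ α with hcdef
  have hc : 0 ≤ c := by
    apply mul_nonneg (mul_nonneg ht (Real.rpow_nonneg hk0.le α)) (Real.rpow_nonneg hlam.le α)
  have hbase : (-(((k:ℝ) * lam) ^ α) * t) = -c := by
    rw [Real.mul_rpow hk0.le hlam.le, hcdef]; ring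
  have hsum : ∀ m : ℕ, Summable (fun r : ℕ =>
      ((-c) ^ r / r.factorial) * (∏ l ∈ Finset.range m, (α * r - l))) := by
    intro m
    apply (summable_fterm hα0.le hα1.le hc m (show (1:ℝ) ∈ Set.Ioo (1/2) 2 by norm_num)).congr
    intro r
    rw [fterm, Real.one_rpow, mul_one]
  have key : ∀ x ∈ Omega k n,
      ((-1 : ℝ) ^ zeta x / ((pifact x : ℝ) * (k : ℝ) ^ zeta x)) *
          iteratedDeriv (zeta x) (fun u : ℝ => Real.exp (-c * u ^ α)) 1 =
        ∑' r : ℕ, ((-1 : ℝ) ^ zeta x / ((pifact x : ℝ) * (k : ℝ) ^ zeta x)) *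
          (((-c) ^ r / r.factorial) * (∏ l ∈ Finset.range (zeta x), (α * r - l))) := by
    intro x _
    rw [iteratedDeriv_exp_at_one hα0.le hα1.le hc, ← tsum_mul_left]
  rw [Finset.sum_congr rfl key,
    ← Summable.tsum_finsetSum (fun x _ => (hsum (zeta x)).mul_left _)]
  apply tsum_congr
  intro r
  rw [hbase, Finset.mul_sum]
  apply Finset.sum_congr rfl
  intro x _
  ring
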